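/- Let T > 0 and λ > 0. Let h : ℝ × ℝ → ℝ be continuous, T-periodic in the first variable, and satisfy (h0) and (h1). Let a : ℝ → ℝ be a locally integrable T-periodic function satisfying (a*). Let g : [0,+∞) → [0,+∞) be continuous and satisfy (g*). Assume that for every constant K > 0 there exist ε > 0 and β > 0 such that h(t, K g(s)) ≤ β s for all t ∈ ℝ and all s ∈ [0,ε). Then every non-trivial T-periodic solution (u,v) of the extended system u' = h(t,v), v' = -f(t,u), where f(t,s) = λ a(t) g(s) for s ≥ 0 and f(t,s) = -s for s < 0, satisfies u(t) > 0 for all t ∈ ℝ. -/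

import Mathlib

open MeasureTheory Set Filter

noncomputable section

/-- `(u, v)` is a `T`-periodic solution of the planar system `u' = F t (v t)`,
`v' = G t (u t)`: both components are continuous, `T`-periodic, and are primitives
(in the sense of the integral form, equivalent to absolute continuity plus the
differential equations holding almost everywhere) of the right-hand sides. -/
def IsPeriodicSol (T : ℝ) (F G : ℝ → ℝ → ℝ) (u v : ℝ → ℝ) : Prop :=
  Continuous u ∧ Continuous v ∧
  Function.Periodic u T ∧ Function.Periodic v T ∧
  (∀ t₁ t₂ : ℝ, IntervalIntegrable (fun s => F s (v s)) volume t₁ t₂) ∧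
  (∀ t₁ t₂ : ℝ, IntervalIntegrable (fun s => G s (u s)) volume t₁ t₂) ∧
  (∀ t : ℝ, u t = u 0 + ∫ s in (0:ℝ)..t, F s (v s)) ∧
  (∀ t : ℝ, v t = v 0 + ∫ s in (0:ℝ)..t, G s (u s))

/-- Condition (a*): there are `N + 1 ≥ 1` pairwise disjoint closed intervals
`[σ n, τ n]` contained in a period, on which `a > 0` a.e., while `a ≤ 0` a.e.
on the rest of the period. -/
def SignChanging (T : ℝ) (a : ℝ → ℝ) (N : ℕ) (σ τ : Fin (N + 1) → ℝ) : Prop :=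
  (∀ n, σ n < τ n) ∧
  (∀ m n : Fin (N + 1), m < n → τ m < σ n) ∧
  (∀ n, τ n < σ 0 + T) ∧
  (∀ n, ∀ᵐ t ∂volume, t ∈ Set.Icc (σ n) (τ n) → 0 < a t) ∧
  (∀ᵐ t ∂volume, t ∈ Set.Ico (σ 0) (σ 0 + T) \ (⋃ n, Set.Icc (σ n) (τ n)) → a t ≤ 0)

theorem statement2
    (T : ℝ) (hT : 0 < T) (lam : ℝ) (hlam : 0 < lam)
    (h : ℝ → ℝ → ℝ) (hhc : Continuous (Function.uncurry h))
    (hhper : ∀ t s : ℝ, h (t + T) s = h t s)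
    (hh0 : ∀ t : ℝ, h t 0 = 0)
    (hh1 : ∀ t : ℝ, StrictMono (h t))
    (a : ℝ → ℝ) (haloc : LocallyIntegrable a volume)
    (haper : Function.Periodic a T)
    (N : ℕ) (σ τ : Fin (N + 1) → ℝ) (hstar : SignChanging T a N σ τ)
    (g : ℝ → ℝ) (hgc : ContinuousOn g (Set.Ici 0))
    (hg0 : g 0 = 0) (hgpos : ∀ s : ℝ, 0 < s → 0 < g s)
    (hsmp : ∀ K : ℝ, 0 < K → ∃ ε : ℝ, 0 < ε ∧ ∃ β : ℝ, 0 < β ∧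
      ∀ t s : ℝ, 0 ≤ s → s < ε → h t (K * g s) ≤ β * s)
    (u v : ℝ → ℝ)
    (hsol : IsPeriodicSol T h
      (fun t x => -(if 0 ≤ x then lam * a t * g x else -x)) u v)
    (hnt : ¬ (∀ t : ℝ, u t = 0 ∧ v t = 0)) :
    ∀ t, 0 < u t := by
  obtain ⟨huc, hvc, huper, hvper, hFint, hGint, huInt, hvInt⟩ := hsol
  have hGint' : ∀ t₁ t₂ : ℝ, IntervalIntegrable
      (fun s => -(if 0 ≤ u s then lam * a s * g (u s) else -(u s))) volume t₁ t₂ := hGint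
  have hφc : Continuous (fun s => h s (v s)) := hhc.comp (continuous_id.prodMk hvc)
  have hgnn : ∀ x : ℝ, 0 ≤ x → 0 ≤ g x := by
    intro x hx
    rcases eq_or_lt_of_le hx with he | hl
    · rw [← he, hg0]
    · exact (hgpos _ hl).le
  have haInt : ∀ p q : ℝ, IntervalIntegrable a volume p q := fun p q =>
    (haloc.integrableOn_isCompact isCompact_uIcc).intervalIntegrable
  have husub : ∀ t₁ t₂ : ℝ, u t₂ - u t₁ = ∫ s in t₁..t₂, h s (v s) := by
    intro t₁ t₂
    have := intervalIntegral.integral_interval_sub_left (hFint 0 t₂) (hFint 0 t₁)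
    rw [huInt t₂, huInt t₁]
    linarith
  have hvsub : ∀ t₁ t₂ : ℝ, v t₂ - v t₁ =
      ∫ s in t₁..t₂, -(if 0 ≤ u s then lam * a s * g (u s) else -(u s)) := by
    intro t₁ t₂
    have := intervalIntegral.integral_interval_sub_left (hGint' 0 t₂) (hGint' 0 t₁)
    rw [hvInt t₂, hvInt t₁]
    linarith
  -- Step 1 : u is everywhere nonnegative
  have unonneg : ∀ t : ℝ, 0 ≤ u t := by
    by_contra hcon
    push_neg at hcon
    obtain ⟨t1, ht1⟩ := hcon
    have hallneg : ¬ (∀ t : ℝ, u t < 0) := by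
      intro hall
      have h2 : v T - v 0 = ∫ s in (0:ℝ)..T, -(if 0 ≤ u s then lam * a s * g (u s) else -(u s)) :=
        hvsub 0 T
      have h4 : (∫ s in (0:ℝ)..T, -(if 0 ≤ u s then lam * a s * g (u s) else -(u s)))
          = ∫ s in (0:ℝ)..T, u s := by
        apply intervalIntegral.integral_congr
        intro s _
        simp [not_le.2 (hall s)]
      have h5 : 0 < ∫ s in (0:ℝ)..T, -(u s) := by
        apply intervalIntegral.intervalIntegral_pos_of_pos_on
          ((huc.neg).intervalIntegrable 0 T) (fun x _ => neg_pos.2 (hall x)) hT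
      rw [intervalIntegral.integral_neg] at h5
      have h6 : v T = v 0 := by simpa using hvper 0
      rw [h6, h4] at h2
      linarith
    have haddnat : ∀ (n : ℕ) (x : ℝ), u (x + n * T) = u x := by
      intro n
      induction n with
      | zero => simp
      | succ k ih =>
        intro x
        have hx : x + ((k : ℝ) + 1) * T = (x + k * T) + T := by ring
        push_cast
        rw [hx, huper, ih]
    have hex_le : ∃ t0, t0 ≤ t1 ∧ 0 ≤ u t0 := by
      by_contra hc
      push_neg at hc
      apply hallneg
      intro t
      obtain ⟨n, hn⟩ := exists_nat_ge ((t - t1) / T)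
      have h1 : t - n * T ≤ t1 := by
        have : t - t1 ≤ n * T := by
          rw [div_le_iff₀ hT] at hn
          linarith
        linarith
      have h2 : u (t - n * T) = u t := huper.sub_nat_mul_eq n
      rw [← h2]
      exact hc _ h1
    have hex_ge : ∃ t4, t1 ≤ t4 ∧ 0 ≤ u t4 := by
      by_contra hc
      push_neg at hc
      apply hallneg
      intro t
      obtain ⟨n, hn⟩ := exists_nat_ge ((t1 - t) / T)
      have h1 : t1 ≤ t + n * T := by
        have : t1 - t ≤ n * T := by
          rw [div_le_iff₀ hT] at hn
          linarith
        linarith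
      rw [← haddnat n t]
      exact hc _ h1
    obtain ⟨t0, ht0le, ht0⟩ := hex_le
    obtain ⟨t4, ht4ge, ht4⟩ := hex_ge
    -- sup of zeros to the left
    set S2 : Set ℝ := Icc t0 t1 ∩ u ⁻¹' (Ici 0) with hS2def
    have hS2closed : IsClosed S2 := isClosed_Icc.inter (isClosed_Ici.preimage huc)
    have hS2ne : S2.Nonempty := ⟨t0, ⟨le_refl _, ht0le⟩, ht0⟩
    have hS2bdd : BddAbove S2 := ⟨t1, fun x hx => hx.1.2⟩
    set t2 := sSup S2 with ht2def
    have ht2mem : t2 ∈ S2 := hS2closed.csSup_mem hS2ne hS2bdd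
    have ht2le : t2 ≤ t1 := ht2mem.1.2
    have hut2 : 0 ≤ u t2 := ht2mem.2
    have ht2lt : t2 < t1 := lt_of_le_of_ne ht2le (by
      intro he
      rw [he] at hut2
      linarith)
    have hneg2 : ∀ s, t2 < s → s ≤ t1 → u s < 0 := by
      intro s hs hs1
      by_contra hcn
      push_neg at hcn
      have hmem : s ∈ S2 := ⟨⟨le_trans ht2mem.1.1 hs.le, hs1⟩, hcn⟩
      exact absurd (le_csSup hS2bdd hmem) (not_le.2 hs)
    have hut2' : u t2 = 0 := by
      refine le_antisymm ?_ hut2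
      have htend : Tendsto u (nhdsWithin t2 (Ioi t2)) (nhds (u t2)) :=
        (huc.tendsto t2).mono_left nhdsWithin_le_nhds
      refine le_of_tendsto htend ?_
      filter_upwards [Ioo_mem_nhdsGT_of_mem (⟨le_refl t2, ht2lt⟩ : t2 ∈ Ico t2 t1)] with s hs
      exact (hneg2 s hs.1 hs.2.le).le
    -- inf of zeros to the right
    set S3 : Set ℝ := Icc t1 t4 ∩ u ⁻¹' (Ici 0) with hS3def
    have hS3closed : IsClosed S3 := isClosed_Icc.inter (isClosed_Ici.preimage huc)
    have hS3ne : S3.Nonempty := ⟨t4, ⟨ht4ge, le_refl _⟩, ht4⟩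
    have hS3bdd : BddBelow S3 := ⟨t1, fun x hx => hx.1.1⟩
    set t3 := sInf S3 with ht3def
    have ht3mem : t3 ∈ S3 := hS3closed.csInf_mem hS3ne hS3bdd
    have ht3ge : t1 ≤ t3 := ht3mem.1.1
    have hut3 : 0 ≤ u t3 := ht3mem.2
    have ht3gt : t1 < t3 := lt_of_le_of_ne ht3ge (by
      intro he
      rw [← he] at hut3
      linarith)
    have hneg3 : ∀ s, t1 ≤ s → s < t3 → u s < 0 := by
      intro s hs1 hs
      by_contra hcn
      push_neg at hcn
      have hmem : s ∈ S3 := ⟨⟨hs1, le_trans hs.le ht3mem.1.2⟩, hcn⟩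
      exact absurd (csInf_le hS3bdd hmem) (not_le.2 hs)
    have hut3' : u t3 = 0 := by
      refine le_antisymm ?_ hut3
      have htend : Tendsto u (nhdsWithin t3 (Iio t3)) (nhds (u t3)) :=
        (huc.tendsto t3).mono_left nhdsWithin_le_nhds
      refine le_of_tendsto htend ?_
      filter_upwards [Ioo_mem_nhdsLT_of_mem (⟨ht3gt, le_refl t3⟩ : t3 ∈ Ioc t1 t3)] with s hs
      exact (hneg3 s hs.1.le hs.2).le
    have hnegmid : ∀ s, t2 < s → s < t3 → u s < 0 := by
      intro s hs hs'
      rcases le_or_gt s t1 with h' | h'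
      · exact hneg2 s hs h'
      · exact hneg3 s h'.le hs'
    by_cases hV : ∀ s, t2 < s → s < t3 → 0 ≤ v s
    · -- v nonnegative on the interval : u increases, contradiction
      have hvt2 : 0 ≤ v t2 := by
        have htend : Tendsto v (nhdsWithin t2 (Ioi t2)) (nhds (v t2)) :=
          (hvc.tendsto t2).mono_left nhdsWithin_le_nhds
        refine ge_of_tendsto htend ?_
        filter_upwards [Ioo_mem_nhdsGT_of_mem
          (⟨le_refl t2, lt_trans ht2lt ht3gt⟩ : t2 ∈ Ico t2 t3)] with s hs
        exact hV s hs.1 hs.2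
      have hint : 0 ≤ ∫ s in t2..t1, h s (v s) := by
        apply intervalIntegral.integral_nonneg ht2lt.le
        intro x hx
        have hvx : 0 ≤ v x := by
          rcases eq_or_lt_of_le hx.1 with he | hl
          · rw [← he]; exact hvt2
          · exact hV x hl (lt_of_le_of_lt hx.2 ht3gt)
        have h1 : h x 0 ≤ h x (v x) := (hh1 x).monotone hvx
        rw [hh0 x] at h1
        exact h1
      have h2 := husub t2 t1
      rw [hut2'] at h2
      linarith
    · push_neg at hV
      obtain ⟨s0, hs0a, hs0b, hs0v⟩ := hV
      have hGnonpos : ∀ r ∈ Icc s0 t3,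
          -(if 0 ≤ u r then lam * a r * g (u r) else -(u r)) ≤ 0 := by
        intro r hr
        rcases eq_or_lt_of_le hr.2 with he | hlt
        · rw [he]
          simp [hut3', hg0]
        · have hur : u r < 0 := hnegmid r (lt_of_lt_of_le hs0a hr.1) hlt
          rw [if_neg (not_le.2 hur)]
          linarith
      have hvle : ∀ s ∈ Icc s0 t3, v s ≤ v s0 := by
        intro s hs
        have h1 := hvsub s0 s
        have h2 : (∫ r in s0..s, -(if 0 ≤ u r then lam * a r * g (u r) else -(u r))) ≤
            ∫ r in s0..s, (0:ℝ) := by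
          apply intervalIntegral.integral_mono_on hs.1 (hGint' s0 s) intervalIntegrable_const
          intro x hx
          exact hGnonpos x ⟨hx.1, le_trans hx.2 hs.2⟩
        simp only [intervalIntegral.integral_zero] at h2
        linarith
      have hint : (∫ r in s0..t3, h r (v r)) ≤ 0 := by
        have h2 : (∫ r in s0..t3, h r (v r)) ≤ ∫ r in s0..t3, (0:ℝ) := by
          apply intervalIntegral.integral_mono_on hs0b.le (hFint s0 t3) intervalIntegrable_const
          intro x hx
          have h1 : v x ≤ v s0 := hvle x hx
          have h2 : h x (v x) ≤ h x (v s0) := (hh1 x).monotone h1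
          have h3 : h x (v s0) < h x 0 := hh1 x hs0v
          rw [hh0 x] at h3
          linarith
        simpa using h2
      have h2 := husub s0 t3
      have hus0 : u s0 < 0 := hnegmid s0 hs0a hs0b
      rw [hut3'] at h2
      linarith
  -- Step 2 : u never vanishes
  have hne : ∀ t : ℝ, u t ≠ 0 := by
    intro t0 hzero
    rcases lt_trichotomy (v t0) 0 with hv | hv | hv
    · -- v t0 < 0 : u becomes negative just after t0
      have hφ : h t0 (v t0) < 0 := by
        have h1 : h t0 (v t0) < h t0 0 := hh1 t0 hv
        rw [hh0 t0] at h1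
        exact h1
      have hev : ∀ᶠ s in nhds t0, h s (v s) < 0 := hφc.continuousAt (Iio_mem_nhds hφ)
      obtain ⟨δ, hδ, hball⟩ := Metric.eventually_nhds_iff.1 hev
      have hpos : 0 < ∫ s in t0..(t0 + δ/2), -(h s (v s)) := by
        apply intervalIntegral.intervalIntegral_pos_of_pos_on
          ((hφc.neg).intervalIntegrable _ _)
        · intro x hx
          have hd : dist x t0 < δ := by
            rw [Real.dist_eq, abs_of_pos (by linarith [hx.1])]
            linarith [hx.2]
          show 0 < -(h x (v x))
          linarith [hball hd]
        · linarith
      rw [intervalIntegral.integral_neg] at hpos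
      have h2 := husub t0 (t0 + δ/2)
      have h3 := unonneg (t0 + δ/2)
      rw [hzero] at h2
      linarith
    · -- v t0 = 0 : solution is trivial, contradiction with hnt
      -- local uniqueness lemma
      have hlocal : ∀ c : ℝ, u c = 0 → v c = 0 →
          ∃ δ : ℝ, 0 < δ ∧ ∀ t ∈ Icc c (c + δ), u t = 0 := by
        intro c huc0 hvc0
        set A := ∫ s in c..(c+1), |a s| with hAdef
        have hA0 : 0 ≤ A := intervalIntegral.integral_nonneg (by linarith)
          (fun x _ => abs_nonneg _)
        have hK : 0 < lam * A + 1 := by nlinarith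
        obtain ⟨ε, hε, β, hβ, hKey⟩ := hsmp (lam * A + 1) hK
        have hevu : ∀ᶠ t in nhds c, u t < ε := huc.continuousAt (Iio_mem_nhds (by
          rw [huc0]; exact hε))
        obtain ⟨δ1, hδ1, hb1⟩ := Metric.eventually_nhds_iff.1 hevu
        set δ := min (min (δ1/2) 1) (1/(2*β)) with hδdef
        have hδpos : 0 < δ := lt_min (lt_min (by linarith) one_pos) (by positivity)
        have hδ1' : δ ≤ δ1/2 := le_trans (min_le_left _ _) (min_le_left _ _)
        have hδle1 : δ ≤ 1 := le_trans (min_le_left _ _) (min_le_right _ _)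
        have hδβ : δ ≤ 1/(2*β) := min_le_right _ _
        refine ⟨δ, hδpos, ?_⟩
        obtain ⟨tm, htm, htmax⟩ := isCompact_Icc.exists_isMaxOn
          (nonempty_Icc.2 (by linarith)) (huc.continuousOn (s := Icc c (c+δ)))
        set M := u tm with hMdef
        have hMax : ∀ t ∈ Icc c (c+δ), u t ≤ M := fun t ht => htmax ht
        have hM0 : 0 ≤ M := le_trans (le_of_eq huc0.symm)
          (hMax c ⟨le_refl _, by linarith⟩)
        have hMε : M < ε := by
          apply hb1
          rw [Real.dist_eq, abs_of_nonneg (by linarith [htm.1])]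
          have := htm.2
          linarith
        obtain ⟨M', hM'mem, hgmaxOn⟩ := isCompact_Icc.exists_isMaxOn
          (nonempty_Icc.2 hM0) (hgc.mono (fun x hx => hx.1))
        have hgmax : ∀ x ∈ Icc (0:ℝ) M, g x ≤ g M' := fun x hx => hgmaxOn hx
        have hgM'0 : 0 ≤ g M' := hgnn _ hM'mem.1
        have hvb : ∀ s ∈ Icc c (c+δ), v s ≤ lam * A * g M' := by
          intro s hs
          have h1 := hvsub c s
          have h2 : (∫ r in c..s, -(if 0 ≤ u r then lam * a r * g (u r) else -(u r))) ≤
              ∫ r in c..s, lam * g M' * |a r| := by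
            apply intervalIntegral.integral_mono_on hs.1 (hGint' c s)
              (((haInt c s).abs).const_mul (lam * g M'))
            intro x hx
            have hux0 : 0 ≤ u x := unonneg x
            have huxM : u x ≤ M := hMax x ⟨hx.1, le_trans hx.2 hs.2⟩
            have hgux : g (u x) ≤ g M' := hgmax _ ⟨hux0, huxM⟩
            have hgux0 : 0 ≤ g (u x) := hgnn _ hux0
            rw [if_pos hux0]
            have h3 : -(a x) ≤ |a x| := neg_le_abs _
            have h4 : 0 ≤ |a x| := abs_nonneg _
            nlinarith [mul_le_mul_of_nonneg_left h3 (mul_nonneg hlam.le hgux0),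
              mul_le_mul_of_nonneg_left hgux (mul_nonneg hlam.le h4)]
          have h3 : (∫ r in c..s, lam * g M' * |a r|) = lam * g M' * ∫ r in c..s, |a r| :=
            intervalIntegral.integral_const_mul _ _
          have h4 : (∫ r in c..s, |a r|) ≤ A := by
            apply intervalIntegral.integral_mono_interval (le_refl c) hs.1
              (by linarith [hs.2]) ?_ ((haInt c (c+1)).abs)
            filter_upwards with x
            exact abs_nonneg _
          have h5 : lam * g M' * (∫ r in c..s, |a r|) ≤ lam * g M' * A :=
            mul_le_mul_of_nonneg_left h4 (mul_nonneg hlam.le hgM'0)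
          have h6 : lam * g M' * A = lam * A * g M' := by ring
          rw [hvc0] at h1
          linarith
        have hMle : M ≤ 0 := by
          have h1 := husub c tm
          have h2 : (∫ s in c..tm, h s (v s)) ≤ ∫ s in c..tm, β * M := by
            apply intervalIntegral.integral_mono_on htm.1 (hFint c tm)
              intervalIntegrable_const
            intro x hx
            have hvx : v x ≤ (lam * A + 1) * g M' := by
              have := hvb x ⟨hx.1, le_trans hx.2 htm.2⟩
              nlinarith
            have h3 : h x (v x) ≤ h x ((lam * A + 1) * g M') := (hh1 x).monotone hvx
            have h4 : h x ((lam * A + 1) * g M') ≤ β * M' :=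
              hKey x M' hM'mem.1 (lt_of_le_of_lt hM'mem.2 hMε)
            have h5 : β * M' ≤ β * M := mul_le_mul_of_nonneg_left hM'mem.2 hβ.le
            linarith
          rw [intervalIntegral.integral_const, smul_eq_mul] at h2
          have h6 : (tm - c) * (β * M) ≤ δ * (β * M) := by
            apply mul_le_mul_of_nonneg_right (by linarith [htm.2])
              (mul_nonneg hβ.le hM0)
          rw [huc0] at h1
          have h7 : β * δ ≤ 1/2 := by
            have h8 : β * δ ≤ β * (1/(2*β)) := mul_le_mul_of_nonneg_left hδβ hβ.le
            have h9 : β * (1/(2*β)) = 1/2 := by field_simp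
            linarith
          nlinarith [mul_le_mul_of_nonneg_right h7 hM0]
        intro t ht
        exact le_antisymm (le_trans (hMax t ht) hMle) (unonneg t)
      -- propagate the zero over a full period
      have hzeroIcc : ∀ t ∈ Icc t0 (t0 + T), u t = 0 := by
        set S : Set ℝ := {b | b ∈ Icc t0 (t0+T) ∧ ∀ t ∈ Icc t0 b, u t = 0} with hSdef
        have hSne : t0 ∈ S := by
          refine ⟨⟨le_refl _, by linarith⟩, ?_⟩
          intro t ht
          have : t = t0 := le_antisymm ht.2 ht.1
          rw [this]; exact hzero
        have hSbdd : BddAbove S := ⟨t0+T, fun x hx => hx.1.2⟩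
        set cc := sSup S with hccdef
        have hccmem1 : cc ∈ Icc t0 (t0+T) :=
          ⟨le_csSup hSbdd hSne, csSup_le ⟨t0, hSne⟩ (fun x hx => hx.1.2)⟩
        have hzlt : ∀ t, t0 ≤ t → t < cc → u t = 0 := by
          intro t ht htc
          obtain ⟨b, hbS, hbt⟩ := exists_lt_of_lt_csSup ⟨t0, hSne⟩ htc
          exact hbS.2 t ⟨ht, hbt.le⟩
        have hucc : u cc = 0 := by
          rcases eq_or_lt_of_le hccmem1.1 with he | hlt
          · rw [← he]; exact hzero
          · have htend : Tendsto u (nhdsWithin cc (Iio cc)) (nhds (u cc)) :=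
              (huc.tendsto cc).mono_left nhdsWithin_le_nhds
            have hev : ∀ᶠ s in nhdsWithin cc (Iio cc), u s = 0 := by
              filter_upwards [Ioo_mem_nhdsLT_of_mem
                (⟨hlt, le_refl cc⟩ : cc ∈ Ioc t0 cc)] with s hs
              exact hzlt s hs.1.le hs.2
            have h2 : Tendsto u (nhdsWithin cc (Iio cc)) (nhds 0) :=
              Tendsto.congr' (by filter_upwards [hev] with s hs; exact hs.symm)
                tendsto_const_nhds
            exact tendsto_nhds_unique htend h2
        have hzle : ∀ t, t0 ≤ t → t ≤ cc → u t = 0 := by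
          intro t ht htc
          rcases eq_or_lt_of_le htc with he | hl
          · rw [he]; exact hucc
          · exact hzlt t ht hl
        have hvcc : v cc = 0 := by
          have h1 := hvsub t0 cc
          have h2 : (∫ r in t0..cc, -(if 0 ≤ u r then lam * a r * g (u r) else -(u r))) = 0 := by
            have heq : EqOn (fun r => -(if 0 ≤ u r then lam * a r * g (u r) else -(u r)))
                (fun _ => (0:ℝ)) (uIcc t0 cc) := by
              intro r hr
              rw [uIcc_of_le hccmem1.1] at hr
              have hur : u r = 0 := hzle r hr.1 hr.2
              simp [hur, hg0]
            rw [intervalIntegral.integral_congr heq]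
            simp
          rw [hv, h2] at h1
          linarith
        rcases eq_or_lt_of_le hccmem1.2 with hend | hcclt
        · intro t ht
          exact hzle t ht.1 (by rw [hend]; exact ht.2)
        · exfalso
          obtain ⟨δ, hδ, hloc⟩ := hlocal cc hucc hvcc
          set b' := min (cc + δ) (t0 + T) with hb'def
          have hb'S : b' ∈ S := by
            constructor
            · exact ⟨le_min (by linarith [hccmem1.1]) (by linarith), min_le_right _ _⟩
            · intro t ht
              rcases le_or_gt t cc with hc | hc
              · exact hzle t ht.1 hc
              · exact hloc t ⟨hc.le, le_trans ht.2 (min_le_left _ _)⟩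
          have h1 : b' ≤ cc := le_csSup hSbdd hb'S
          have h2 : cc < b' := lt_min (by linarith) hcclt
          linarith
      have hzeroAll : ∀ t, u t = 0 := by
        intro t
        have hmem := toIcoMod_mem_Ico hT t0 t
        have heq : u (toIcoMod hT t0 t) = u t := by
          rw [toIcoMod]
          exact huper.sub_zsmul_eq _
        rw [← heq]
        exact hzeroIcc _ ⟨hmem.1, hmem.2.le⟩
      have hvAll : ∀ t, v t = 0 := by
        intro t
        have h1 := hvsub t0 t
        have h2 : (∫ r in t0..t, -(if 0 ≤ u r then lam * a r * g (u r) else -(u r))) = 0 := by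
          have heq : EqOn (fun r => -(if 0 ≤ u r then lam * a r * g (u r) else -(u r)))
              (fun _ => (0:ℝ)) (uIcc t0 t) := by
            intro r _
            simp [hzeroAll r, hg0]
          rw [intervalIntegral.integral_congr heq]
          simp
        rw [hv, h2] at h1
        linarith
      exact hnt (fun t => ⟨hzeroAll t, hvAll t⟩)
    · -- v t0 > 0 : u was negative just before t0
      have hφ : 0 < h t0 (v t0) := by
        have h1 : h t0 0 < h t0 (v t0) := hh1 t0 hv
        rw [hh0 t0] at h1
        exact h1
      have hev : ∀ᶠ s in nhds t0, 0 < h s (v s) := hφc.continuousAt (Ioi_mem_nhds hφ)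
      obtain ⟨δ, hδ, hball⟩ := Metric.eventually_nhds_iff.1 hev
      have hpos : 0 < ∫ s in (t0 - δ/2)..t0, h s (v s) := by
        apply intervalIntegral.intervalIntegral_pos_of_pos_on
          (hφc.intervalIntegrable _ _)
        · intro x hx
          have hd : dist x t0 < δ := by
            rw [Real.dist_eq, abs_of_neg (by linarith [hx.2])]
            linarith [hx.1]
          exact hball hd
        · linarith
      have h2 := husub (t0 - δ/2) t0
      have h3 := unonneg (t0 - δ/2)
      rw [hzero] at h2
      linarith
  intro t
  exact lt_of_le_of_ne (unonneg t) (Ne.symm (hne t))
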